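/- The map T : [0,1] → [0,1], Tx = 1 - x, is not a Kannan mapping (there is no a ∈ [0,1/2) with |Tx-Ty| ≤ a(|x-Tx|+|y-Ty|) for all x,y), but it is a (k,a)-enriched Kannan mapping for suitable k > 0 and a ∈ [0,1/2). -/
import Mathlib

theorem one_sub_is_enriched_kannan_not_kannan :
    (¬ ∃ a : ℝ, 0 ≤ a ∧ a < 1 / 2 ∧ ∀ x ∈ Set.Icc (0:ℝ) 1, ∀ y ∈ Set.Icc (0:ℝ) 1,
        |(1 - x) - (1 - y)| ≤ a * (|x - (1 - x)| + |y - (1 - y)|)) ∧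
    ∃ k : ℝ, 0 < k ∧ ∃ a : ℝ, 0 ≤ a ∧ a < 1 / 2 ∧
      ∀ x ∈ Set.Icc (0:ℝ) 1, ∀ y ∈ Set.Icc (0:ℝ) 1,
        |k * (x - y) + (1 - x) - (1 - y)| ≤ a * (|x - (1 - x)| + |y - (1 - y)|) := by
  constructor
  · rintro ⟨a, ha0, ha, h⟩
    have := h 0 (by norm_num) 1 (by norm_num)
    simp [abs_of_nonneg] at this
    norm_num [abs_of_nonpos] at this
    linarith
  · exact ⟨1, one_pos, 0, le_refl 0, by norm_num, fun x _ y _ => by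
      simp [show (1:ℝ) * (x - y) + (1 - x) - (1 - y) = 0 by ring]⟩
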